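/- Let n ≥ 2 and define, for x ∈ ℝⁿ with xₙ ≠ 0: R(x) = exp(−(x_{n−1}/xₙ)X)·x and Qᵣ(x) = the r-th coordinate of R(x). Then for each r with 1 ≤ r ≤ n−2 there exists a polynomial pᵣ ∈ ℝ[x₁,…,xₙ] such that: (i) pᵣ(x) = xₙ^{n−r−1}·Qᵣ(x) for all x with xₙ ≠ 0, and (ii) pᵣ is G-invariant, i.e. pᵣ(exp(tX)·x) = pᵣ(x) for all t ∈ ℝ and x ∈ ℝⁿ. -/

import Mathlib

open Matrix

noncomputable def jordanX (n : ℕ) : Matrix (Fin n) (Fin n) ℝ :=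
  Matrix.of fun i j => if (i : ℕ) + 1 = (j : ℕ) then 1 else 0

noncomputable def uniAct (n : ℕ) (t : ℝ) (x : Fin n → ℝ) : Fin n → ℝ :=
  (NormedSpace.exp (t • jordanX n)).mulVec x

lemma jordanX_pow (n k : ℕ) :
    jordanX n ^ k = Matrix.of fun i j : Fin n => if (i : ℕ) + k = (j : ℕ) then 1 else 0 := by
  induction k with
  | zero =>
    ext i j
    simp [Matrix.one_apply, Fin.ext_iff, eq_comm]
  | succ k ih =>
    ext i j
    rw [pow_succ, ih]
    simp only [Matrix.mul_apply, Matrix.of_apply, jordanX]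
    by_cases h : (i : ℕ) + k < n
    · have hcond : ∀ l : Fin n, ((i : ℕ) + k = (l : ℕ)) ↔ l = ⟨(i : ℕ) + k, h⟩ := by
        intro l; simp [Fin.ext_iff, eq_comm]
      simp_rw [hcond, ite_mul, one_mul, zero_mul]
      rw [Finset.sum_ite_eq' Finset.univ (⟨(i : ℕ) + k, h⟩ : Fin n)]
      simp only [Finset.mem_univ, if_true]
      congr 1
    · have h1 : ∀ l : Fin n, ¬ ((i : ℕ) + k = (l : ℕ)) := fun l hl => h (hl ▸ l.isLt)
      have h2 : ¬ ((i : ℕ) + (k + 1) = (j : ℕ)) := by omega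
      simp [h1, h2]

lemma exp_jordan (n : ℕ) (t : ℝ) :
    NormedSpace.exp (t • jordanX n) =
      Matrix.of fun i j : Fin n =>
        if (i : ℕ) ≤ (j : ℕ) then t ^ ((j : ℕ) - i) / (((j : ℕ) - i).factorial : ℝ) else 0 := by
  rw [NormedSpace.exp_eq_tsum (𝕂 := ℝ)]
  beta_reduce
  rw [tsum_eq_sum (s := Finset.range n) (f := fun k => ((k.factorial : ℝ)⁻¹ : ℝ) • (t • jordanX n) ^ k)
    (by
      intro k hk
      simp only [Finset.mem_range, not_lt] at hk
      beta_reduce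
      rw [smul_pow, jordanX_pow]
      ext i j
      have : ¬ ((i : ℕ) + k = (j : ℕ)) := by have := j.isLt; omega
      simp [this])]
  ext i j
  simp only [Matrix.sum_apply, Matrix.smul_apply, smul_pow, jordanX_pow, Matrix.of_apply,
    smul_eq_mul]
  by_cases hij : (i : ℕ) ≤ (j : ℕ)
  · have hcond : ∀ k, ((i : ℕ) + k = (j : ℕ)) ↔ k = (j : ℕ) - (i : ℕ) := by intro k; omega
    simp_rw [hcond]
    have hmem : (j : ℕ) - (i : ℕ) ∈ Finset.range n := by
      simp only [Finset.mem_range]; have := j.isLt; omega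
    simp_rw [mul_ite, mul_one, mul_zero]
    rw [Finset.sum_ite_eq' (Finset.range n) ((j : ℕ) - (i : ℕ)), if_pos hmem, if_pos hij,
      div_eq_inv_mul]
  · have : ∀ k, ¬ ((i : ℕ) + k = (j : ℕ)) := by intro k; omega
    simp [this, hij]

lemma uniAct_apply (n : ℕ) (t : ℝ) (x : Fin n → ℝ) (i : Fin n) :
    uniAct n t x i = ∑ j : Fin n,
      (if (i : ℕ) ≤ (j : ℕ) then t ^ ((j : ℕ) - i) / (((j : ℕ) - i).factorial : ℝ) else 0) * x j := by
  rw [uniAct, exp_jordan]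
  rfl

lemma sum_window {M : Type*} [AddCommMonoid M] {n : ℕ} (i : ℕ) (hi : i < n) (f : Fin n → M)
    (hf : ∀ j : Fin n, (j : ℕ) < i → f j = 0) :
    ∑ j : Fin n, f j = ∑ k : Fin (n - i), f ⟨i + (k : ℕ), by omega⟩ := by
  set F : ℕ → M := fun j => if h : j < n then f ⟨j, h⟩ else 0 with hF
  have h1 : ∑ j : Fin n, f j = ∑ j ∈ Finset.range n, F j := by
    rw [← Fin.sum_univ_eq_sum_range]
    exact Finset.sum_congr rfl fun j _ => by simp [hF, j.isLt]
  have h2 : ∑ k : Fin (n - i), f ⟨i + (k : ℕ), by omega⟩ = ∑ k ∈ Finset.range (n - i), F (i + k) := by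
    rw [← Fin.sum_univ_eq_sum_range]
    refine Finset.sum_congr rfl fun k _ => ?_
    have hk : i + (k : ℕ) < n := by omega
    simp [hF, hk]
  rw [h1, h2, ← Finset.sum_Ico_eq_sum_range]
  rw [Finset.range_eq_Ico, ← Finset.sum_Ico_consecutive F (Nat.zero_le i) (le_of_lt hi)]
  have : ∑ j ∈ Finset.Ico 0 i, F j = 0 := by
    refine Finset.sum_eq_zero fun j hj => ?_
    simp only [Finset.mem_Ico] at hj
    have hjn : j < n := lt_of_lt_of_le hj.2 (le_of_lt hi)
    simp [hF, hjn, hf ⟨j, hjn⟩ hj.2]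
  rw [this, zero_add]

lemma uniAct_window (n : ℕ) (t : ℝ) (x : Fin n → ℝ) (i : Fin n) :
    uniAct n t x i = ∑ k : Fin (n - (i : ℕ)),
      t ^ (k : ℕ) / ((k : ℕ).factorial : ℝ) * x ⟨(i : ℕ) + (k : ℕ), by have := k.isLt; omega⟩ := by
  rw [uniAct_apply]
  rw [sum_window (i : ℕ) i.isLt _ (fun j hj => by rw [if_neg (by omega), zero_mul])]
  refine Finset.sum_congr rfl fun k _ => ?_
  simp

lemma uniAct_last (n : ℕ) (hn : 1 ≤ n) (t : ℝ) (x : Fin n → ℝ) :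
    uniAct n t x ⟨n - 1, by omega⟩ = x ⟨n - 1, by omega⟩ := by
  rw [uniAct_apply]
  rw [Finset.sum_eq_single (⟨n - 1, by omega⟩ : Fin n)]
  · simp
  · intro j _ hj
    have hj' : ¬ (n - 1 ≤ (j : ℕ)) := by
      have h1 : (j : ℕ) ≠ n - 1 := fun h => hj (Fin.ext h)
      have := j.isLt; omega
    simp [hj']
  · simp

lemma uniAct_pre (n : ℕ) (hn : 2 ≤ n) (t : ℝ) (x : Fin n → ℝ) :
    uniAct n t x ⟨n - 2, by omega⟩ = x ⟨n - 2, by omega⟩ + t * x ⟨n - 1, by omega⟩ := by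
  rw [uniAct_apply]
  have hne : (⟨n - 2, by omega⟩ : Fin n) ≠ ⟨n - 1, by omega⟩ := by
    simp only [ne_eq, Fin.mk.injEq]; omega
  rw [← Finset.sum_subset (Finset.subset_univ {(⟨n - 2, by omega⟩ : Fin n), ⟨n - 1, by omega⟩})
    (fun j _ hj => ?_), Finset.sum_pair hne]
  · have h1 : n - 2 - (n - 2) = 0 := by omega
    have h2 : n - 1 - (n - 2) = 1 := by omega
    rw [if_pos (le_refl _), if_pos (by omega : n - 2 ≤ n - 1), h1, h2]
    norm_num
  · simp only [Finset.mem_insert, Finset.mem_singleton, not_or] at hj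
    have hj' : ¬ (n - 2 ≤ (j : ℕ)) := by
      have h1 : (j : ℕ) ≠ n - 2 := fun h => hj.1 (Fin.ext h)
      have h2 : (j : ℕ) ≠ n - 1 := fun h => hj.2 (Fin.ext h)
      have := j.isLt; omega
    simp [hj']

lemma uniAct_comp (n : ℕ) (s t : ℝ) (x : Fin n → ℝ) :
    uniAct n s (uniAct n t x) = uniAct n (s + t) x := by
  unfold uniAct
  rw [Matrix.mulVec_mulVec, ← Matrix.exp_add_of_commute _ _
    (((Commute.refl (jordanX n)).smul_left s).smul_right t), ← add_smul]

lemma uniAct_range (n : ℕ) (t : ℝ) (x : Fin n → ℝ) (i : Fin n) :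
    uniAct n t x i = ∑ k ∈ Finset.range (n - (i : ℕ)),
      t ^ k / (k.factorial : ℝ) * (if h : (i : ℕ) + k < n then x ⟨(i : ℕ) + k, h⟩ else 0) := by
  rw [uniAct_window]
  rw [← Fin.sum_univ_eq_sum_range
    (fun k => t ^ k / (k.factorial : ℝ) * (if h : (i : ℕ) + k < n then x ⟨(i : ℕ) + k, h⟩ else 0))
    (n - (i : ℕ))]
  exact Finset.sum_congr rfl fun k _ => by
    rw [dif_pos (by have := k.isLt; omega : (i : ℕ) + (k : ℕ) < n)]

theorem exists_invariant_polynomial_P (n : ℕ) (hn : 2 ≤ n)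
    (r : ℕ) (hr1 : 1 ≤ r) (hr2 : r ≤ n - 2) :
    ∃ p : MvPolynomial (Fin n) ℝ,
      (∀ x : Fin n → ℝ, x ⟨n - 1, by omega⟩ ≠ 0 →
        MvPolynomial.eval x p =
          (x ⟨n - 1, by omega⟩) ^ (n - r - 1) *
            uniAct n (-(x ⟨n - 2, by omega⟩ / x ⟨n - 1, by omega⟩)) x ⟨r - 1, by omega⟩) ∧
      (∀ (t : ℝ) (x : Fin n → ℝ),
        MvPolynomial.eval (uniAct n t x) p = MvPolynomial.eval x p) := by
  have hn1 : n - 1 < n := by omega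
  have hn2 : n - 2 < n := by omega
  set m := n - r with hm
  have hm2 : 2 ≤ m := by omega
  set iL : Fin n := ⟨n - 1, hn1⟩ with hiL
  set iP : Fin n := ⟨n - 2, hn2⟩ with hiP
  set p : MvPolynomial (Fin n) ℝ :=
    (∑ k ∈ Finset.range m, if h : r - 1 + k < n then
        MvPolynomial.C ((-1 : ℝ) ^ k / (k.factorial : ℝ)) *
          MvPolynomial.X (⟨r - 1 + k, h⟩ : Fin n) *
          MvPolynomial.X iP ^ k * MvPolynomial.X iL ^ (m - 1 - k) else 0)
      + MvPolynomial.C ((-1 : ℝ) ^ m / (m.factorial : ℝ)) * MvPolynomial.X iP ^ m with hp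
  have hkey : ∀ x : Fin n → ℝ, x iL ≠ 0 →
      MvPolynomial.eval x p = (x iL) ^ (m - 1) *
        uniAct n (-(x iP / x iL)) x ⟨r - 1, by omega⟩ := by
    intro x hx
    have hunfold : uniAct n (-(x iP / x iL)) x ⟨r - 1, by omega⟩
        = ∑ k ∈ Finset.range (n - (r - 1)),
            (-(x iP / x iL)) ^ k / (k.factorial : ℝ) *
              (if h : r - 1 + k < n then x ⟨r - 1 + k, h⟩ else 0) := by
      rw [uniAct_range]
    have hcard : n - (r - 1) = m + 1 := by omega
    rw [hunfold, hcard, Finset.mul_sum, Finset.sum_range_succ]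
    rw [hp]
    simp only [map_add, map_sum, _root_.map_mul, map_pow, MvPolynomial.eval_C, MvPolynomial.eval_X,
      apply_dite (MvPolynomial.eval x), map_zero]
    congr 1
    · refine Finset.sum_congr rfl fun k hk => ?_
      simp only [Finset.mem_range] at hk
      have hkn : r - 1 + k < n := by omega
      rw [dif_pos hkn, dif_pos hkn]
      have hsplit : x iL ^ (m - 1) = x iL ^ (m - 1 - k) * x iL ^ k := by
        rw [← pow_add]; congr 1; omega
      have hpowr : (-(x iP / x iL)) ^ k = (-1 : ℝ) ^ k * (x iP ^ k / x iL ^ k) := by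
        rw [neg_pow, div_pow]
      rw [hsplit, hpowr]
      have hfac : ((k.factorial : ℝ)) ≠ 0 := Nat.cast_ne_zero.mpr k.factorial_ne_zero
      field_simp
    · have hkn : r - 1 + m < n := by omega
      rw [dif_pos hkn]
      have hEq : (⟨r - 1 + m, hkn⟩ : Fin n) = iL := by
        rw [hiL]; exact Fin.ext (by simp; omega)
      have hpowr : (-(x iP / x iL)) ^ m = (-1 : ℝ) ^ m * (x iP ^ m / x iL ^ m) := by
        rw [neg_pow, div_pow]
      rw [hEq, hpowr]
      have hfac : ((m.factorial : ℝ)) ≠ 0 := Nat.cast_ne_zero.mpr m.factorial_ne_zero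
      have hpow : x iL ^ (m - 1) * x iL = x iL ^ m := by rw [← pow_succ]; congr 1; omega
      field_simp
      linear_combination (-(x iP ^ m)) * hpow
  have hinv : ∀ (t : ℝ) (x : Fin n → ℝ), x iL ≠ 0 →
      MvPolynomial.eval (uniAct n t x) p = MvPolynomial.eval x p := by
    intro t x hx
    have hyL : uniAct n t x iL = x iL := uniAct_last n (by omega) t x
    have hyP : uniAct n t x iP = x iP + t * x iL := uniAct_pre n hn t x
    rw [hkey x hx, hkey _ (show uniAct n t x iL ≠ 0 by rw [hyL]; exact hx), hyL, hyP, uniAct_comp]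
    have harg : -((x iP + t * x iL) / x iL) + t = -(x iP / x iL) := by
      field_simp
      ring
    rw [harg]
  refine ⟨p, fun x hx => hkey x hx, fun t x => ?_⟩
  have h1 : Continuous fun y : Fin n → ℝ => MvPolynomial.eval y p :=
    MvPolynomial.continuous_eval p
  have h2 : Continuous fun y : Fin n → ℝ => uniAct n t y :=
    (Matrix.mulVecLin (NormedSpace.exp (t • jordanX n))).continuous_of_finiteDimensional
  have hF : Continuous fun y : Fin n → ℝ =>
      MvPolynomial.eval (uniAct n t y) p - MvPolynomial.eval y p := (h1.comp h2).sub h1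
  have hdense : Dense {y : Fin n → ℝ | y iL ≠ 0} := by
    intro x0
    by_cases hx0 : x0 iL ≠ 0
    · exact subset_closure hx0
    · push_neg at hx0
      have hseq : Filter.Tendsto (fun k : ℕ => Function.update x0 iL (1 / ((k : ℝ) + 1)))
          Filter.atTop (nhds x0) := by
        rw [tendsto_pi_nhds]
        intro j
        by_cases hj : j = iL
        · subst hj
          simp only [Function.update_self]
          rw [hx0]
          exact tendsto_one_div_add_atTop_nhds_zero_nat
        · simp only [Function.update_of_ne hj]
          exact tendsto_const_nhds
      refine mem_closure_of_tendsto hseq (Filter.Eventually.of_forall fun k => ?_)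
      have : (0 : ℝ) < 1 / ((k : ℝ) + 1) := by positivity
      simp only [Set.mem_setOf_eq, Function.update_self]
      exact ne_of_gt this
  have hzero : (fun y : Fin n → ℝ =>
      MvPolynomial.eval (uniAct n t y) p - MvPolynomial.eval y p) = fun _ => 0 :=
    Continuous.ext_on hdense hF continuous_const fun y hy => sub_eq_zero.mpr (hinv t y hy)
  have hx := congrFun hzero x
  exact sub_eq_zero.mp hx
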